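/- Let X and Y be metric spaces with Gromov–Hausdorff distance s = d_GH(X,Y). If X is δ-hyperbolic, then Y is (δ+4s)-hyperbolic. Consequently |hyp(X) − hyp(Y)| ≤ 4·d_GH(X,Y). -/
import Mathlib


/-- Gromov's four-point condition: `X` is `δ`-hyperbolic. -/
def IsDeltaHyperbolic (X : Type*) [MetricSpace X] (δ : ℝ) : Prop :=
  ∀ w x y z : X,
    dist w x + dist y z ≤ max (dist w y + dist x z) (dist w z + dist x y) + 2 * δ

/-- The hyperbolicity of `X`: the infimum over all `δ ≥ 0` such that `X` is
`δ`-hyperbolic. -/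
noncomputable def hyperbolicity (X : Type*) [MetricSpace X] : EReal :=
  sInf {n : EReal | ∃ δ : ℝ, 0 ≤ δ ∧ IsDeltaHyperbolic X δ ∧ n = (δ : EReal)}

def IsCorrespondence (X Y : Type*) (C : Set (X × Y)) : Prop :=
  (∀ x : X, ∃ y : Y, (x, y) ∈ C) ∧ (∀ y : Y, ∃ x : X, (x, y) ∈ C)

def DistortionLE {X Y : Type*} [MetricSpace X] [MetricSpace Y]
    (C : Set (X × Y)) (t : ℝ) : Prop :=
  ∀ p ∈ C, ∀ q ∈ C, |dist p.1 q.1 - dist p.2 q.2| ≤ t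

/-- The set whose infimum is the Gromov–Hausdorff distance between `X` and `Y`. -/
def ghSet (X Y : Type*) [MetricSpace X] [MetricSpace Y] : Set ℝ :=
  {s | ∃ C : Set (X × Y), IsCorrespondence X Y C ∧ DistortionLE C (2 * s)}

/-- Core four-point transfer along a correspondence. -/
lemma core_transfer {X Y : Type*} [MetricSpace X] [MetricSpace Y] {C : Set (X × Y)}
    {t δ : ℝ} (hC : ∀ y : Y, ∃ x, (x, y) ∈ C) (hdis : DistortionLE C (2 * t))
    (hX : IsDeltaHyperbolic X δ) (w x y z : Y) :
    dist w x + dist y z ≤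
      max (dist w y + dist x z) (dist w z + dist x y) + 2 * δ + 8 * t := by
  obtain ⟨w', hw⟩ := hC w
  obtain ⟨x', hx⟩ := hC x
  obtain ⟨y', hy⟩ := hC y
  obtain ⟨z', hz⟩ := hC z
  have hwx := abs_le.1 (hdis _ hw _ hx)
  have hyz := abs_le.1 (hdis _ hy _ hz)
  have hwy := abs_le.1 (hdis _ hw _ hy)
  have hxz := abs_le.1 (hdis _ hx _ hz)
  have hwz := abs_le.1 (hdis _ hw _ hz)
  have hxy := abs_le.1 (hdis _ hx _ hy)
  have h4 := hX w' x' y' z'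
  rcases le_total (dist w' y' + dist x' z') (dist w' z' + dist x' y') with h | h
  · rw [max_eq_right h] at h4
    have : dist w' z' + dist x' y' ≤ dist w z + dist x y + 4 * t := by
      simp only at hwz hxy; linarith [hwz.1, hwz.2, hxy.1, hxy.2]
    have hmax : dist w z + dist x y ≤ max (dist w y + dist x z) (dist w z + dist x y) :=
      le_max_right _ _
    simp only at hwx hyz
    linarith [hwx.1, hwx.2, hyz.1, hyz.2]
  · rw [max_eq_left h] at h4
    have : dist w' y' + dist x' z' ≤ dist w y + dist x z + 4 * t := by
      simp only at hwy hxz; linarith [hwy.1, hwy.2, hxz.1, hxz.2]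
    have hmax : dist w y + dist x z ≤ max (dist w y + dist x z) (dist w z + dist x y) :=
      le_max_left _ _
    simp only at hwx hyz
    linarith [hwx.1, hwx.2, hyz.1, hyz.2]

lemma transfer {X Y : Type*} [MetricSpace X] [MetricSpace Y] {δ s : ℝ}
    (hne : (ghSet X Y).Nonempty) (hs : s = sInf (ghSet X Y))
    (hX : IsDeltaHyperbolic X δ) : IsDeltaHyperbolic Y (δ + 4 * s) := by
  intro w x y z
  have key : ∀ t ∈ ghSet X Y,
      (dist w x + dist y z - max (dist w y + dist x z) (dist w z + dist x y) - 2 * δ) / 8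
        ≤ t := by
    rintro t ⟨C, ⟨-, h2⟩, hdis⟩
    have := core_transfer h2 hdis hX w x y z
    linarith
  have := le_csInf hne key
  rw [← hs] at this
  linarith

lemma transfer' {X Y : Type*} [MetricSpace X] [MetricSpace Y] {δ s : ℝ}
    (hne : (ghSet X Y).Nonempty) (hs : s = sInf (ghSet X Y))
    (hY : IsDeltaHyperbolic Y δ) : IsDeltaHyperbolic X (δ + 4 * s) := by
  intro w x y z
  have key : ∀ t ∈ ghSet X Y,
      (dist w x + dist y z - max (dist w y + dist x z) (dist w z + dist x y) - 2 * δ) / 8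
        ≤ t := by
    rintro t ⟨C, ⟨h1, -⟩, hdis⟩
    have hdis' : DistortionLE {p : Y × X | (p.2, p.1) ∈ C} (2 * t) := by
      intro p hp q hq
      rw [abs_sub_comm]
      exact hdis _ hp _ hq
    have hC' : ∀ a : X, ∃ b : Y, (b, a) ∈ ({p : Y × X | (p.2, p.1) ∈ C} : Set (Y × X)) :=
      fun a => (h1 a).imp fun b hb => hb
    have := core_transfer hC' hdis' hY w x y z
    linarith
  have := le_csInf hne key
  rw [← hs] at this
  linarith

lemma hyp_le {Z : Type*} [MetricSpace Z] {δ : ℝ} (hδ : 0 ≤ δ)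
    (h : IsDeltaHyperbolic Z δ) : hyperbolicity Z ≤ (δ : EReal) :=
  sInf_le ⟨δ, hδ, h, rfl⟩

lemma hyp_empty {Z : Type*} [MetricSpace Z] (h : ¬Nonempty Z) : hyperbolicity Z = 0 := by
  apply le_antisymm
  · have := hyp_le (Z := Z) le_rfl (fun w => absurd ⟨w⟩ h)
    simpa using this
  · apply le_sInf
    rintro n ⟨δ', hδ', -, rfl⟩
    exact_mod_cast hδ'

lemma hyp_add_le {X Y : Type*} [MetricSpace X] [MetricSpace Y] {s : ℝ} (hs0 : 0 ≤ s)
    (htr : ∀ δ' : ℝ, 0 ≤ δ' → IsDeltaHyperbolic X δ' → IsDeltaHyperbolic Y (δ' + 4 * s)) :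
    hyperbolicity Y ≤ hyperbolicity X + ((4 * s : ℝ) : EReal) := by
  rw [← EReal.sub_le_iff_le_add (Or.inl (EReal.coe_ne_bot _)) (Or.inl (EReal.coe_ne_top _))]
  apply le_sInf
  rintro n ⟨δ', hδ', hh, rfl⟩
  rw [EReal.sub_le_iff_le_add (Or.inl (EReal.coe_ne_bot _)) (Or.inl (EReal.coe_ne_top _))]
  calc hyperbolicity Y ≤ ((δ' + 4 * s : ℝ) : EReal) :=
        hyp_le (by linarith) (htr δ' hδ' hh)
    _ = (δ' : EReal) + ((4 * s : ℝ) : EReal) := by rw [← EReal.coe_add]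

/-- If `s = d_GH(X,Y)` and `X` is `δ`-hyperbolic, then `Y` is `(δ + 4s)`-hyperbolic.
Consequently `|hyp(X) − hyp(Y)| ≤ 4 · d_GH(X,Y)`. -/
theorem stmt4 (X Y : Type*) [MetricSpace X] [MetricSpace Y] (δ s : ℝ) (hδ : 0 ≤ δ)
    (hne : (ghSet X Y).Nonempty) (hs : s = sInf (ghSet X Y))
    (hX : IsDeltaHyperbolic X δ) :
    IsDeltaHyperbolic Y (δ + 4 * s) ∧
      hyperbolicity Y ≤ hyperbolicity X + ((4 * s : ℝ) : EReal) ∧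
      hyperbolicity X ≤ hyperbolicity Y + ((4 * s : ℝ) : EReal) := by
  refine ⟨transfer hne hs hX, ?_⟩
  by_cases hYne : Nonempty Y
  · have hs0 : 0 ≤ s := by
      rw [hs]
      apply le_csInf hne
      rintro t ⟨C, ⟨-, h2⟩, hdis⟩
      obtain ⟨x1, hx1⟩ := h2 (Classical.arbitrary Y)
      have := hdis _ hx1 _ hx1
      simp at this
      linarith
    exact ⟨hyp_add_le hs0 (fun δ' hδ' hh => transfer hne hs hh),
      hyp_add_le hs0 (fun δ' hδ' hh => transfer' hne hs hh)⟩
  · have hXe : ¬Nonempty X := by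
      rintro ⟨x0⟩
      obtain ⟨t0, C0, ⟨h01, -⟩, -⟩ := id hne
      obtain ⟨y0, -⟩ := h01 x0
      exact hYne ⟨y0⟩
    have hgh : ghSet X Y = Set.univ := by
      ext t
      simp only [Set.mem_univ, iff_true]
      exact ⟨∅, ⟨fun x => absurd ⟨x⟩ hXe, fun y => absurd ⟨y⟩ hYne⟩,
        fun p hp => absurd hp (Set.notMem_empty p)⟩
    have hsz : s = 0 := by
      rw [hs, hgh]
      apply Real.sInf_of_not_bddBelow
      rintro ⟨b, hb⟩
      have := hb (Set.mem_univ (b - 1))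
      linarith
    rw [hyp_empty hYne, hyp_empty hXe, hsz]
    simp
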